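/- For every z ∈ Ξ, the set M_z = {G_z(φ,g) : φ ∈ Φ, g ∈ Δ_z} is a group under matrix multiplication: G_z(0,0) = I, M_z is closed under multiplication, and for every φ ∈ Φ, g ∈ Δ_z one has G_z(φ,g) · G_z(−φ,−g) = I, so G_z(φ,g)⁻¹ = G_z(−φ,−g) ∈ M_z. -/

import Mathlib

open Polynomial Matrix

noncomputable section

/-- The matrix `D = diag(-1,1,...,1)` of size `ν × ν` with `ν = n + 2`. -/
def Dm (n : ℕ) : Matrix (Fin (n + 2)) (Fin (n + 2)) ℂ :=
  Matrix.diagonal fun i => if i = 0 then -1 else 1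

/-- Coefficientwise complex conjugation of a scalar polynomial (`ω` treated as real). -/
def cstar (p : ℂ[X]) : ℂ[X] := p.map (starRingEnd ℂ)

/-- Polynomial matrices of size `(n+2) × (n+2)`. -/
abbrev PM (n : ℕ) := Matrix (Fin (n + 2)) (Fin (n + 2)) ℂ[X]

/-- `U(ω)* = Σ Uι* ωⁱ` : coefficientwise conjugate transpose of a polynomial matrix. -/
def Mstar (n : ℕ) (U : PM n) : PM n := Matrix.of fun i j => cstar (U j i)

/-- The scalar polynomial `g(ω)* h(ω)` for vector polynomials `g, h`. -/
def pdot (n : ℕ) (g h : Fin (n + 2) → ℂ[X]) : ℂ[X] := ∑ i, cstar (g i) * h i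

/-- `Ξ = {z : z₁ = 1, z* D z = 0}`. -/
def Xi (n : ℕ) : Set (Fin (n + 2) → ℂ) :=
  {z | z 0 = 1 ∧ star z ⬝ᵥ (Dm n).mulVec z = 0}

/-- `Δ_z⁰ = {d : d* z = d* D z = 0}`. -/
def Delta0 (n : ℕ) (z : Fin (n + 2) → ℂ) : Set (Fin (n + 2) → ℂ) :=
  {d | star d ⬝ᵥ z = 0 ∧ star d ⬝ᵥ (Dm n).mulVec z = 0}

/-- `Φ = {φ : φ(0) = 0, φ* = -φ}`. -/
def Phi : Set ℂ[X] := {φ | φ.eval 0 = 0 ∧ cstar φ = -φ}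

/-- `Δ_z` : vector polynomials vanishing at 0 with all coefficient vectors in `Δ_z⁰`. -/
def DeltaZ (n : ℕ) (z : Fin (n + 2) → ℂ) : Set (Fin (n + 2) → ℂ[X]) :=
  {g | (∀ i, (g i).eval 0 = 0) ∧ ∀ k : ℕ, (fun i => (g i).coeff k) ∈ Delta0 n z}

/-- `G_z(φ,g) = D·[z(φ - (1/2)g*g)z* + (zg* - gz*)] + I`. -/
def Gmat (n : ℕ) (z : Fin (n + 2) → ℂ) (φ : ℂ[X]) (g : Fin (n + 2) → ℂ[X]) : PM n :=
  (Dm n).map Polynomial.C *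
      Matrix.of (fun i j =>
        Polynomial.C (z i) * (φ - Polynomial.C (1 / 2 : ℂ) * pdot n g g) *
            Polynomial.C (star (z j)) +
          (Polynomial.C (z i) * cstar (g j) - g i * Polynomial.C (star (z j)))) +
    1

/-- `M` : the group of polynomial matrices with `U(ω) D U(ω)* = D`. -/
def MM (n : ℕ) : Set (PM n) :=
  {U | U * (Dm n).map Polynomial.C * Mstar n U = (Dm n).map Polynomial.C}

/-- `M₀ = {U ∈ M : U(0) = I}`. -/
def M0 (n : ℕ) : Set (PM n) :=
  {U | U ∈ MM n ∧ U.map (fun p => p.eval 0) = 1}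

/-- `M_z = {G_z(φ,g) : φ ∈ Φ, g ∈ Δ_z}`. -/
def Mz (n : ℕ) (z : Fin (n + 2) → ℂ) : Set (PM n) :=
  {U | ∃ φ ∈ Phi, ∃ g ∈ DeltaZ n z, U = Gmat n z φ g}

/-- `Ψ_z = {G_z(φ,0) : φ ∈ Φ}`. -/
def Psi (n : ℕ) (z : Fin (n + 2) → ℂ) : Set (PM n) :=
  {U | ∃ φ ∈ Phi, U = Gmat n z φ 0}

/-- Degree of a polynomial matrix: the largest `ι` with a nonzero coefficient `ω^ι`. -/
def degPM (n : ℕ) (U : PM n) : ℕ :=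
  Finset.univ.sup fun p : Fin (n + 2) × Fin (n + 2) => (U p.1 p.2).natDegree

namespace Stmt2Aux

variable {n : ℕ} {z : Fin (n + 2) → ℂ} {g g₁ g₂ : Fin (n + 2) → ℂ[X]} {φ : ℂ[X]}

def dc (n : ℕ) (k : Fin (n + 2)) : ℂ := if k = 0 then -1 else 1

lemma star_dc (k : Fin (n + 2)) : star (dc n k) = dc n k := by
  unfold dc; split_ifs <;> simp

lemma hDmap (n : ℕ) : (Dm n).map Polynomial.C
    = Matrix.diagonal (fun i => Polynomial.C (dc n i)) := by
  unfold Dm dc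
  rw [Matrix.diagonal_map (map_zero Polynomial.C)]

lemma mulVec_Dm (z : Fin (n + 2) → ℂ) : (Dm n).mulVec z = fun k => dc n k * z k := by
  funext k; simp [Dm, dc, Matrix.mulVec_diagonal]

lemma cstar_add (p q : ℂ[X]) : cstar (p + q) = cstar p + cstar q := by
  simp [cstar, Polynomial.map_add]

lemma cstar_neg (p : ℂ[X]) : cstar (-p) = -cstar p := by simp [cstar]

lemma cstar_zero : cstar (0 : ℂ[X]) = 0 := by simp [cstar]

lemma cstar_mul (p q : ℂ[X]) : cstar (p * q) = cstar p * cstar q := by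
  simp [cstar, Polynomial.map_mul]

lemma cstar_C (a : ℂ) : cstar (Polynomial.C a) = Polynomial.C (star a) := by
  simp [cstar]

lemma cstar_coeff (p : ℂ[X]) (m : ℕ) : (cstar p).coeff m = star (p.coeff m) := by
  simp [cstar]

lemma cstar_cstar (p : ℂ[X]) : cstar (cstar p) = p :=
  Polynomial.ext fun m => by rw [cstar_coeff, cstar_coeff, star_star]

lemma cstar_sum {ι : Type*} (s : Finset ι) (f : ι → ℂ[X]) :
    cstar (∑ i ∈ s, f i) = ∑ i ∈ s, cstar (f i) :=
  Polynomial.ext fun m => by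
    rw [cstar_coeff, Polynomial.finset_sum_coeff, Polynomial.finset_sum_coeff, star_sum]
    exact Finset.sum_congr rfl fun i _ => (cstar_coeff _ _).symm

lemma cstar_eval0 (p : ℂ[X]) : (cstar p).eval 0 = star (p.eval 0) := by
  rw [← Polynomial.coeff_zero_eq_eval_zero, ← Polynomial.coeff_zero_eq_eval_zero, cstar_coeff]

lemma pdot_add_left (g₁ g₂ h : Fin (n + 2) → ℂ[X]) :
    pdot n (g₁ + g₂) h = pdot n g₁ h + pdot n g₂ h := by
  simp [pdot, cstar_add, add_mul, Finset.sum_add_distrib]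

lemma pdot_add_right (g h₁ h₂ : Fin (n + 2) → ℂ[X]) :
    pdot n g (h₁ + h₂) = pdot n g h₁ + pdot n g h₂ := by
  simp [pdot, mul_add, Finset.sum_add_distrib]

lemma pdot_neg_left (g h : Fin (n + 2) → ℂ[X]) : pdot n (-g) h = -pdot n g h := by
  simp [pdot, cstar_neg]

lemma pdot_neg_right (g h : Fin (n + 2) → ℂ[X]) : pdot n g (-h) = -pdot n g h := by
  simp [pdot]

lemma pdot_swap (g h : Fin (n + 2) → ℂ[X]) : cstar (pdot n g h) = pdot n h g := by
  rw [pdot, cstar_sum, pdot]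
  exact Finset.sum_congr rfl fun i _ => by rw [cstar_mul, cstar_cstar, mul_comm]

lemma pdot_eval0 {h : Fin (n + 2) → ℂ[X]} (hh : ∀ i, (h i).eval 0 = 0) :
    (pdot n g h).eval 0 = 0 := by
  simp [pdot, Polynomial.eval_finset_sum, hh]


lemma hg_z (hg : g ∈ DeltaZ n z) (m : ℕ) :
    ∑ k, star ((g k).coeff m) * z k = 0 := by
  have h := (hg.2 m).1
  simpa [dotProduct] using h

lemma hg_Dz (hg : g ∈ DeltaZ n z) (m : ℕ) :
    ∑ k, star ((g k).coeff m) * (dc n k * z k) = 0 := by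
  have h := (hg.2 m).2
  rw [mulVec_Dm] at h
  simpa [dotProduct] using h

lemma g_zero (hz : z ∈ Xi n) (hg : g ∈ DeltaZ n z) : g 0 = 0 := by
  apply Polynomial.ext; intro m
  have h3 : ∑ k, (star ((g k).coeff m) * z k - star ((g k).coeff m) * (dc n k * z k)) = 0 := by
    rw [Finset.sum_sub_distrib, hg_z hg m, hg_Dz hg m, sub_zero]
  rw [Finset.sum_eq_single (0 : Fin (n + 2))
      (fun k _ hk => by simp [dc, hk]) (by simp)] at h3
  have hdc0 : dc n 0 = -1 := if_pos rfl
  rw [hdc0, hz.1] at h3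
  have h4 : star ((g 0).coeff m) = 0 := by linear_combination h3 / 2
  simpa using congrArg star h4

lemma S3sum (hz : z ∈ Xi n) :
    ∑ k, Polynomial.C (dc n k * z k * star (z k)) = (0 : ℂ[X]) := by
  rw [← map_sum]
  have h := hz.2
  rw [mulVec_Dm] at h
  simp only [dotProduct, Pi.star_apply] at h
  have : ∑ k, dc n k * z k * star (z k) = 0 := by
    rw [← h]; exact Finset.sum_congr rfl fun k _ => by ring
  rw [this, map_zero]

lemma L2sum (hg : g ∈ DeltaZ n z) :
    ∑ k, cstar (g k) * Polynomial.C (dc n k * z k) = 0 := by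
  apply Polynomial.ext; intro m
  rw [Polynomial.finset_sum_coeff]
  have : ∀ k ∈ Finset.univ, (cstar (g k) * Polynomial.C (dc n k * z k)).coeff m
      = star ((g k).coeff m) * (dc n k * z k) := fun k _ => by
    rw [Polynomial.coeff_mul_C, cstar_coeff]
  rw [Finset.sum_congr rfl this, hg_Dz hg m]
  simp

lemma S4sum (hg : g ∈ DeltaZ n z) :
    ∑ k, Polynomial.C (star (z k) * dc n k) * g k = 0 := by
  apply Polynomial.ext; intro m
  rw [Polynomial.finset_sum_coeff]
  have e : ∀ k ∈ Finset.univ, (Polynomial.C (star (z k) * dc n k) * g k).coeff m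
      = star (star ((g k).coeff m) * (dc n k * z k)) := fun k _ => by
    rw [Polynomial.coeff_C_mul, StarMul.star_mul, StarMul.star_mul, star_star, star_dc]
  rw [Finset.sum_congr rfl e, ← star_sum, hg_Dz hg m]
  simp

lemma L5sum (hz : z ∈ Xi n) (hg₁ : g₁ ∈ DeltaZ n z) (g₂ : Fin (n + 2) → ℂ[X]) :
    ∑ k, cstar (g₁ k) * (Polynomial.C (dc n k) * g₂ k) = pdot n g₁ g₂ := by
  rw [pdot]
  refine Finset.sum_congr rfl fun k _ => ?_
  by_cases hk : k = 0
  · subst hk; rw [g_zero hz hg₁, cstar_zero, zero_mul, zero_mul]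
  · simp [dc, hk]

lemma S1sum (hz : z ∈ Xi n) (hg₁ : g₁ ∈ DeltaZ n z) (ψ : ℂ[X]) :
    ∑ k, (ψ * Polynomial.C (star (z k)) + cstar (g₁ k)) * Polynomial.C (dc n k * z k) = 0 := by
  have e : ∀ k ∈ Finset.univ,
      (ψ * Polynomial.C (star (z k)) + cstar (g₁ k)) * Polynomial.C (dc n k * z k)
        = ψ * Polynomial.C (dc n k * z k * star (z k))
          + cstar (g₁ k) * Polynomial.C (dc n k * z k) := fun k _ => by
    simp only [_root_.map_mul]; ring
  rw [Finset.sum_congr rfl e, Finset.sum_add_distrib, ← Finset.mul_sum, S3sum hz,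
    L2sum hg₁]
  simp

lemma S2sum (hz : z ∈ Xi n) (hg₁ : g₁ ∈ DeltaZ n z) (hg₂ : g₂ ∈ DeltaZ n z) (ψ : ℂ[X]) :
    ∑ k, (ψ * Polynomial.C (star (z k)) + cstar (g₁ k)) * (Polynomial.C (dc n k) * g₂ k)
      = pdot n g₁ g₂ := by
  have e : ∀ k ∈ Finset.univ,
      (ψ * Polynomial.C (star (z k)) + cstar (g₁ k)) * (Polynomial.C (dc n k) * g₂ k)
        = ψ * (Polynomial.C (star (z k) * dc n k) * g₂ k)
          + cstar (g₁ k) * (Polynomial.C (dc n k) * g₂ k) := fun k _ => by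
    simp only [_root_.map_mul]; ring
  rw [Finset.sum_congr rfl e, Finset.sum_add_distrib, ← Finset.mul_sum, S4sum hg₂,
    L5sum hz hg₁ g₂]
  simp


lemma keysum (hz : z ∈ Xi n) (hg₁ : g₁ ∈ DeltaZ n z) (hg₂ : g₂ ∈ DeltaZ n z)
    (ψ₁ ψ₂ : ℂ[X]) (i j : Fin (n + 2)) :
    ∑ k, (Polynomial.C (z i) * ψ₁ * Polynomial.C (star (z k)) +
          (Polynomial.C (z i) * cstar (g₁ k) - g₁ i * Polynomial.C (star (z k)))) *
        Polynomial.C (dc n k) *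
        (Polynomial.C (z k) * ψ₂ * Polynomial.C (star (z j)) +
          (Polynomial.C (z k) * cstar (g₂ j) - g₂ k * Polynomial.C (star (z j))))
      = -(Polynomial.C (z i) * pdot n g₁ g₂ * Polynomial.C (star (z j))) := by
  have e : ∀ k ∈ Finset.univ,
      (Polynomial.C (z i) * ψ₁ * Polynomial.C (star (z k)) +
          (Polynomial.C (z i) * cstar (g₁ k) - g₁ i * Polynomial.C (star (z k)))) *
        Polynomial.C (dc n k) *
        (Polynomial.C (z k) * ψ₂ * Polynomial.C (star (z j)) +
          (Polynomial.C (z k) * cstar (g₂ j) - g₂ k * Polynomial.C (star (z j))))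
      = (Polynomial.C (z i) * (ψ₂ * Polynomial.C (star (z j)) + cstar (g₂ j))) *
            ((ψ₁ * Polynomial.C (star (z k)) + cstar (g₁ k)) * Polynomial.C (dc n k * z k))
        - (Polynomial.C (z i) * Polynomial.C (star (z j))) *
            ((ψ₁ * Polynomial.C (star (z k)) + cstar (g₁ k)) * (Polynomial.C (dc n k) * g₂ k))
        - (g₁ i * (ψ₂ * Polynomial.C (star (z j)) + cstar (g₂ j))) *
            Polynomial.C (dc n k * z k * star (z k))
        + (g₁ i * Polynomial.C (star (z j))) *
            (Polynomial.C (star (z k) * dc n k) * g₂ k) := fun k _ => by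
    simp only [_root_.map_mul]; ring
  rw [Finset.sum_congr rfl e, Finset.sum_add_distrib, Finset.sum_sub_distrib,
    Finset.sum_sub_distrib, ← Finset.mul_sum, ← Finset.mul_sum, ← Finset.mul_sum,
    ← Finset.mul_sum, S1sum hz hg₁ ψ₁, S2sum hz hg₁ hg₂ ψ₁, S3sum hz, S4sum hg₂]
  ring

lemma Gmul (hz : z ∈ Xi n) (hg₁ : g₁ ∈ DeltaZ n z) (hg₂ : g₂ ∈ DeltaZ n z)
    (φ₁ φ₂ : ℂ[X]) :
    Gmat n z φ₁ g₁ * Gmat n z φ₂ g₂ =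
      Gmat n z (φ₁ + φ₂ + Polynomial.C (1 / 2 : ℂ) * (pdot n g₂ g₁ - pdot n g₁ g₂))
        (g₁ + g₂) := by
  unfold Gmat
  rw [hDmap n]
  have key : ∀ (A B T : PM n), A * Matrix.diagonal (fun i => Polynomial.C (dc n i)) * B + A + B = T →
      (Matrix.diagonal (fun i => Polynomial.C (dc n i)) * A + 1) *
        (Matrix.diagonal (fun i => Polynomial.C (dc n i)) * B + 1)
      = Matrix.diagonal (fun i => Polynomial.C (dc n i)) * T + 1 := by
    intro A B T h
    rw [← h]
    noncomm_ring
  apply key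
  refine Matrix.ext fun i j => ?_
  simp only [Matrix.add_apply]
  rw [Matrix.mul_apply]
  simp only [Matrix.mul_diagonal, Matrix.of_apply]
  rw [keysum hz hg₁ hg₂ _ _ i j]
  have hp : pdot n (g₁ + g₂) (g₁ + g₂) =
      pdot n g₁ g₁ + pdot n g₁ g₂ + pdot n g₂ g₁ + pdot n g₂ g₂ := by
    rw [pdot_add_left, pdot_add_right, pdot_add_right]; ring
  simp only [Pi.add_apply, cstar_add, hp]
  have h2 : Polynomial.C (1 / 2 : ℂ) * 2 = 1 := by
    rw [← map_ofNat (Polynomial.C : ℂ →+* ℂ[X]) 2, ← _root_.map_mul]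
    norm_num
  linear_combination (Polynomial.C (z i) * pdot n g₁ g₂ * Polynomial.C (star (z j))) * h2


lemma Phi_zero : (0 : ℂ[X]) ∈ Phi := ⟨by simp, by rw [cstar_zero, neg_zero]⟩

lemma Phi_neg (hφ : φ ∈ Phi) : -φ ∈ Phi :=
  ⟨by simp [hφ.1], by rw [cstar_neg, hφ.2, neg_neg]⟩

lemma Phi_comb (hφ₁ : φ₁ ∈ Phi) (hφ₂ : φ₂ ∈ Phi) (hg₁ : g₁ ∈ DeltaZ n z)
    (hg₂ : g₂ ∈ DeltaZ n z) :
    φ₁ + φ₂ + Polynomial.C (1 / 2 : ℂ) * (pdot n g₂ g₁ - pdot n g₁ g₂) ∈ Phi := by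
  constructor
  · simp [hφ₁.1, hφ₂.1, pdot_eval0 hg₁.1, pdot_eval0 hg₂.1]
  · rw [cstar_add, cstar_add, cstar_mul, cstar_C, hφ₁.2, hφ₂.2]
    have : cstar (pdot n g₂ g₁ - pdot n g₁ g₂) = pdot n g₁ g₂ - pdot n g₂ g₁ := by
      rw [sub_eq_add_neg, cstar_add, cstar_neg, pdot_swap, pdot_swap]; ring
    rw [this]
    have hs : star (1 / 2 : ℂ) = 1 / 2 := by norm_num
    rw [hs]; ring

lemma Delta0_zero : (0 : Fin (n + 2) → ℂ) ∈ Delta0 n z :=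
  ⟨by simp, by simp⟩

lemma Delta0_neg {d : Fin (n + 2) → ℂ} (h : d ∈ Delta0 n z) : -d ∈ Delta0 n z :=
  ⟨by rw [star_neg, neg_dotProduct, h.1, neg_zero],
   by rw [star_neg, neg_dotProduct, h.2, neg_zero]⟩

lemma Delta0_add {d₁ d₂ : Fin (n + 2) → ℂ} (h₁ : d₁ ∈ Delta0 n z) (h₂ : d₂ ∈ Delta0 n z) :
    d₁ + d₂ ∈ Delta0 n z :=
  ⟨by rw [star_add, add_dotProduct, h₁.1, h₂.1, add_zero],
   by rw [star_add, add_dotProduct, h₁.2, h₂.2, add_zero]⟩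

lemma DeltaZ_zero : (0 : Fin (n + 2) → ℂ[X]) ∈ DeltaZ n z :=
  ⟨by simp, fun k => by convert (Delta0_zero (n := n) (z := z)) using 1; funext i; simp⟩

lemma DeltaZ_neg (hg : g ∈ DeltaZ n z) : -g ∈ DeltaZ n z := by
  refine ⟨fun i => by simp [hg.1 i], fun k => ?_⟩
  have : (fun i => ((-g) i).coeff k) = -(fun i => (g i).coeff k) := by
    funext i; simp
  rw [this]
  exact Delta0_neg (hg.2 k)

lemma DeltaZ_add (h₁ : g₁ ∈ DeltaZ n z) (h₂ : g₂ ∈ DeltaZ n z) : g₁ + g₂ ∈ DeltaZ n z := by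
  refine ⟨fun i => by simp [h₁.1 i, h₂.1 i], fun k => ?_⟩
  have : (fun i => ((g₁ + g₂) i).coeff k)
      = (fun i => (g₁ i).coeff k) + (fun i => (g₂ i).coeff k) := by
    funext i; simp
  rw [this]
  exact Delta0_add (h₁.2 k) (h₂.2 k)

lemma G00 : Gmat n z 0 0 = 1 := by
  unfold Gmat
  have h0 : pdot n (0 : Fin (n + 2) → ℂ[X]) 0 = 0 := by simp [pdot]
  have : Matrix.of (fun i j =>
      Polynomial.C (z i) * ((0 : ℂ[X]) - Polynomial.C (1 / 2 : ℂ) *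
          pdot n (0 : Fin (n + 2) → ℂ[X]) 0) * Polynomial.C (star (z j)) +
        (Polynomial.C (z i) * cstar ((0 : Fin (n + 2) → ℂ[X]) j) -
          (0 : Fin (n + 2) → ℂ[X]) i * Polynomial.C (star (z j)))) = (0 : PM n) := by
    refine Matrix.ext fun i j => ?_
    simp [h0, cstar_zero]
  rw [this, mul_zero, zero_add]

end Stmt2Aux

open Stmt2Aux


/-- for every `z ∈ Ξ`, the set `M_z = {G_z(φ,g)}` is a group under
matrix multiplication: `G_z(0,0) = I`, closure under multiplication, and
`G_z(φ,g) · G_z(−φ,−g) = I` with `G_z(−φ,−g) ∈ M_z`. -/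
theorem stmt2 (n : ℕ) (z : Fin (n + 2) → ℂ) (hz : z ∈ Xi n) :
    Gmat n z 0 0 = 1 ∧
      (1 : PM n) ∈ Mz n z ∧
      (∀ A ∈ Mz n z, ∀ B ∈ Mz n z, A * B ∈ Mz n z) ∧
      (∀ φ ∈ Phi, ∀ g ∈ DeltaZ n z,
        Gmat n z φ g * Gmat n z (-φ) (-g) = 1 ∧ Gmat n z (-φ) (-g) ∈ Mz n z) := by
  refine ⟨G00, ⟨0, Phi_zero, 0, DeltaZ_zero, G00.symm⟩, ?_, ?_⟩
  · rintro A ⟨φ₁, hφ₁, g₁, hg₁, rfl⟩ B ⟨φ₂, hφ₂, g₂, hg₂, rfl⟩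
    exact ⟨_, Phi_comb hφ₁ hφ₂ hg₁ hg₂, _, DeltaZ_add hg₁ hg₂, Gmul hz hg₁ hg₂ φ₁ φ₂⟩
  · intro φ hφ g hg
    refine ⟨?_, ⟨-φ, Phi_neg hφ, -g, DeltaZ_neg hg, rfl⟩⟩
    rw [Gmul hz hg (DeltaZ_neg hg) φ (-φ)]
    have e1 : φ + -φ + Polynomial.C (1 / 2 : ℂ) * (pdot n (-g) g - pdot n g (-g)) = 0 := by
      rw [pdot_neg_left, pdot_neg_right]; ring
    have e2 : g + -g = 0 := add_neg_cancel g
    rw [e1, e2]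
    exact G00
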